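/- Let χ be an even primitive Dirichlet character modulo q with q > 1, let c be a positive multiple of q, and let d be an integer coprime to c. The Dirichlet series L(s, E_{χ,1}, d/c) := Σ_{m≥1} (Σ_{ab=m} χ(a))·e(md/c)·m^{−s}, absolutely convergent for Re(s) > 1, extends to a meromorphic function on all of ℂ that is holomorphic except for a simple pole at s = 1 with residue τ(χ)·conj(χ)(d)·L(1, conj(χ))/c, where conj(χ) is the complex conjugate character and L(·, conj(χ)) its Dirichlet L-function. -/

import Mathlib

open Finset Complex Real Filter

/-- The coefficient `∑_{ab=m} χ a` of the Eisenstein newform `E_{χ,1}`. -/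
noncomputable def eisCoef {q : ℕ} (χ : DirichletCharacter ℂ q) (m : ℕ) : ℂ :=
  ∑ ab ∈ m.divisorsAntidiagonal, χ (ab.1 : ZMod q)

/-- The Voronoĭ `L`-series `L(s, E_{χ,1}, x/c) = ∑_{m≥1} (∑_{ab=m} χ a) e(mx/c) m^{-s}`. -/
noncomputable def voronoiL {q : ℕ} (χ : DirichletCharacter ℂ q) (c : ℕ) (x : ℤ) (s : ℂ) : ℂ :=
  ∑' m : ℕ,
    eisCoef χ m * Complex.exp (2 * π * I * ((m : ℂ) * (x : ℂ) / (c : ℂ))) * (m : ℂ) ^ (-s)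

/-- The Gauss sum `τ(χ) = ∑_{d mod q} χ d · e(d/q)`. -/
noncomputable def gaussSumOf {q : ℕ} (χ : DirichletCharacter ℂ q) : ℂ :=
  ∑ d ∈ Finset.range q, χ (d : ZMod q) * Complex.exp (2 * π * I * ((d : ℂ) / (q : ℂ)))


lemma vterm_eq (N : ℕ) [NeZero N] (Θ : ZMod N → ℂ) {s : ℂ} (hs : s ≠ 0) :
    (fun n : ℕ => Θ (n : ZMod N) * (n : ℂ) ^ (-s))
      = LSeries.term (fun n : ℕ => Θ (n : ZMod N)) s := by
  funext n
  rcases eq_or_ne n 0 with rfl | hn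
  · simp [LSeries.term, Complex.zero_cpow (neg_ne_zero.mpr hs)]
  · rw [LSeries.term_of_ne_zero hn, Complex.cpow_neg, div_eq_mul_inv]

lemma vsummable (N : ℕ) [NeZero N] (Θ : ZMod N → ℂ) {s : ℂ} (hs : 1 < s.re) :
    Summable (fun n : ℕ => Θ (n : ZMod N) * (n : ℂ) ^ (-s)) := by
  rw [vterm_eq N Θ (ne_zero_of_one_lt_re hs)]
  exact ZMod.LSeriesSummable_of_one_lt_re Θ hs

lemma vLFunction_eq_tsum (N : ℕ) [NeZero N] (Θ : ZMod N → ℂ) {s : ℂ} (hs : 1 < s.re) :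
    ZMod.LFunction Θ s = ∑' n : ℕ, Θ (n : ZMod N) * (n : ℂ) ^ (-s) := by
  rw [ZMod.LFunction_eq_LSeries Θ hs, LSeries, vterm_eq N Θ (ne_zero_of_one_lt_re hs)]

lemma vsum_range_zmod (N : ℕ) [NeZero N] (g : ZMod N → ℂ) :
    ∑ i ∈ Finset.range N, g (i : ZMod N) = ∑ x : ZMod N, g x :=
  Finset.sum_nbij' (fun i => (i : ZMod N)) (fun x => x.val)
    (fun _ _ => Finset.mem_univ _) (fun x _ => Finset.mem_range.mpr (ZMod.val_lt x))
    (fun i hi => by simp [ZMod.val_natCast_of_lt (Finset.mem_range.mp hi)])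
    (fun x _ => ZMod.natCast_rightInverse x) (fun _ _ => rfl)

lemma vsum_range_mul (q r : ℕ) (g : ℕ → ℂ) :
    ∑ i ∈ Finset.range (q * r), g i
      = ∑ p ∈ Finset.range q ×ˢ Finset.range r, g (p.1 + q * p.2) := by
  rcases Nat.eq_zero_or_pos q with rfl | hq
  · simp
  refine Finset.sum_nbij' (fun i => (i % q, i / q)) (fun p => p.1 + q * p.2) ?_ ?_ ?_ ?_ ?_
  · intro i hi
    rw [Finset.mem_range] at hi
    refine Finset.mem_product.mpr ⟨Finset.mem_range.mpr (Nat.mod_lt _ hq), Finset.mem_range.mpr ?_⟩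
    exact Nat.div_lt_of_lt_mul (by omega)
  · intro p hp
    rw [Finset.mem_product, Finset.mem_range, Finset.mem_range] at hp
    refine Finset.mem_range.mpr ?_
    calc p.1 + q * p.2 < q + q * p.2 := by omega
    _ = q * (p.2 + 1) := by ring
    _ ≤ q * r := Nat.mul_le_mul_left _ (by omega)
  · intro i _; exact Nat.mod_add_div i q
  · intro p hp
    rw [Finset.mem_product, Finset.mem_range, Finset.mem_range] at hp
    have h1 : (p.1 + q * p.2) % q = p.1 := by
      rw [Nat.add_mul_mod_self_left, Nat.mod_eq_of_lt hp.1]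
    have h2 : (p.1 + q * p.2) / q = p.2 := by
      rw [Nat.add_mul_div_left _ _ hq, Nat.div_eq_of_lt hp.1, zero_add]
    simp [h1, h2]
  · intro i _; rw [Nat.mod_add_div]

lemma vnorm_cpow {s : ℂ} (hs : s.re ≠ 0) (n : ℕ) : ‖(n : ℂ) ^ (-s)‖ = 1 / (n : ℝ) ^ s.re := by
  rcases Nat.eq_zero_or_pos n with rfl | hn
  · rw [Nat.cast_zero, Complex.zero_cpow (neg_ne_zero.mpr (fun h => hs (by rw [h]; rfl))),
      norm_zero, Nat.cast_zero, Real.zero_rpow hs, div_zero]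
  · rw [Complex.norm_natCast_cpow_of_pos hn, neg_re, Real.rpow_neg (Nat.cast_nonneg n),
      one_div]

lemma vsummable_h {s : ℂ} (hs : 1 < s.re) : Summable (fun n : ℕ => ‖(n : ℂ) ^ (-s)‖) := by
  have : (fun n : ℕ => ‖(n : ℂ) ^ (-s)‖) = fun n : ℕ => 1 / (n : ℝ) ^ s.re := by
    funext n; exact vnorm_cpow (by linarith) n
  rw [this]
  exact Real.summable_one_div_nat_rpow.mpr hs

lemma vfiber_eq (n : ℕ) (hn : n ≠ 0) :
    (fun p : ℕ × ℕ => p.1 * p.2) ⁻¹' {n} = ↑n.divisorsAntidiagonal := by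
  ext p; simp [Nat.mem_divisorsAntidiagonal, hn]

set_option maxHeartbeats 1000000 in
lemma vsummable_G {s : ℂ} (hs : 1 < s.re) :
    Summable (fun m : ℕ =>
      ∑' p : (fun p : ℕ × ℕ => p.1 * p.2) ⁻¹' {m}, ‖((p : ℕ × ℕ).1 : ℂ) ^ (-s)‖ *
        ‖((p : ℕ × ℕ).2 : ℂ) ^ (-s)‖) := by
  have hF : Summable (fun p : ℕ × ℕ => ‖(p.1 : ℂ) ^ (-s)‖ * ‖(p.2 : ℂ) ^ (-s)‖) :=
    (vsummable_h hs).mul_of_nonneg (vsummable_h hs) (fun _ => norm_nonneg _)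
      (fun _ => norm_nonneg _)
  exact (hF.hasSum.tsum_fiberwise (fun p => p.1 * p.2)).summable

lemma vnorm_exp_unit (x : ℝ) : ‖Complex.exp (2 * π * I * (x : ℂ))‖ = 1 := by
  have : (2 * π * I * (x : ℂ)) = ((2 * π * x : ℝ) : ℂ) * I := by push_cast; ring
  rw [this]
  exact Complex.norm_exp_ofReal_mul_I _

lemma vnorm_term_le (q : ℕ) (χ : DirichletCharacter ℂ q) (w : ℂ) (hw : ‖w‖ = 1)
    {s : ℂ} (hs : 1 < s.re) (m : ℕ) :
    ‖eisCoef χ m * w * (m : ℂ) ^ (-s)‖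
      ≤ ∑' p : (fun p : ℕ × ℕ => p.1 * p.2) ⁻¹' {m}, ‖((p : ℕ × ℕ).1 : ℂ) ^ (-s)‖ *
        ‖((p : ℕ × ℕ).2 : ℂ) ^ (-s)‖ := by
  rcases eq_or_ne m 0 with rfl | hm
  · rw [show eisCoef χ 0 = 0 by simp [eisCoef], zero_mul, zero_mul, norm_zero]
    exact tsum_nonneg (fun _ => mul_nonneg (norm_nonneg _) (norm_nonneg _))
  · rw [vfiber_eq m hm, tsum_subtype
      (↑m.divisorsAntidiagonal : Set (ℕ × ℕ)) (fun p => ‖(p.1 : ℂ) ^ (-s)‖ * ‖(p.2 : ℂ) ^ (-s)‖),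
      tsum_eq_sum (s := m.divisorsAntidiagonal) (by
        intro p hp
        simp [Set.indicator_of_notMem, hp])]
    have key : ∀ p ∈ m.divisorsAntidiagonal,
        Set.indicator (↑m.divisorsAntidiagonal)
          (fun p : ℕ × ℕ => ‖(p.1 : ℂ) ^ (-s)‖ * ‖(p.2 : ℂ) ^ (-s)‖) p = ‖(m : ℂ) ^ (-s)‖ := by
      intro p hp
      rw [Set.indicator_of_mem (by exact_mod_cast hp), ← norm_mul]
      congr 1
      rw [← (Nat.mem_divisorsAntidiagonal.mp hp).1]
      push_cast
      exact (natCast_mul_natCast_cpow _ _ _).symm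
    rw [Finset.sum_congr rfl key, Finset.sum_const, nsmul_eq_mul]
    have h1 : ‖eisCoef χ m‖ ≤ (m.divisorsAntidiagonal.card : ℝ) := by
      refine (norm_sum_le _ _).trans ?_
      calc ∑ p ∈ m.divisorsAntidiagonal, ‖χ ((p.1 : ZMod q))‖
          ≤ ∑ _p ∈ m.divisorsAntidiagonal, (1 : ℝ) :=
            Finset.sum_le_sum fun p _ => DirichletCharacter.norm_le_one χ _
        _ = (m.divisorsAntidiagonal.card : ℝ) := by rw [Finset.sum_const, nsmul_eq_mul, mul_one]
    calc ‖eisCoef χ m * w * (m : ℂ) ^ (-s)‖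
        = ‖eisCoef χ m‖ * ‖w‖ * ‖(m : ℂ) ^ (-s)‖ := by rw [norm_mul, norm_mul]
      _ ≤ (m.divisorsAntidiagonal.card : ℝ) * 1 * ‖(m : ℂ) ^ (-s)‖ := by
          gcongr
          exact hw.le
      _ = (m.divisorsAntidiagonal.card : ℝ) * ‖(m : ℂ) ^ (-s)‖ := by ring

lemma vsummable_main (q : ℕ) (χ : DirichletCharacter ℂ q) (c : ℕ) (d : ℤ) {s : ℂ}
    (hs : 1 < s.re) :
    Summable fun m : ℕ =>
      ‖eisCoef χ m * Complex.exp (2 * π * I * ((m : ℂ) * (d : ℂ) / (c : ℂ))) *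
        (m : ℂ) ^ (-s)‖ := by
  refine Summable.of_nonneg_of_le (fun _ => norm_nonneg _) (fun m => ?_) (vsummable_G hs)
  refine vnorm_term_le q χ _ ?_ hs m
  have : ((m : ℂ) * (d : ℂ) / (c : ℂ)) = ((m * d / c : ℝ) : ℂ) := by push_cast; ring
  rw [this]
  exact vnorm_exp_unit _

section defs

variable (q c : ℕ) [NeZero q] [NeZero c] (χ : DirichletCharacter ℂ q) (d : ℤ)

/-- The function `β ↦ e(d α β / c)` on `ZMod c`. -/
noncomputable def vTheta (α : ZMod c) : ZMod c → ℂ :=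
  fun β => ZMod.stdAddChar ((d : ZMod c) * α * β)

noncomputable def vZ (α : ZMod c) (s : ℂ) : ℂ := ZMod.LFunction (vTheta c d α) s

noncomputable def vH (α : ZMod c) (s : ℂ) : ℂ :=
  ZMod.LFunction (fun β => if β = α then (1 : ℂ) else 0) s

noncomputable def vchi (α : ZMod c) : ℂ := χ ((α.val : ZMod q))

noncomputable def vf (s : ℂ) : ℂ :=
  ∑ α : ZMod c, vchi q c χ α * (vZ c d α s * vH c α s)

noncomputable def vA (s : ℂ) : ℂ := ∑ α : ZMod c, vchi q c χ α * vZ c d α s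

noncomputable def vg (s : ℂ) : ℕ × ℕ → ℂ := fun p =>
  χ ((p.1 : ZMod q)) * ZMod.stdAddChar (((p.1 * p.2 * d : ℤ) : ZMod c)) *
    ((p.1 : ℂ) ^ (-s) * (p.2 : ℂ) ^ (-s))

end defs

noncomputable def vW (q c : ℕ) [NeZero q] [NeZero c] (χ : DirichletCharacter ℂ q) (d : ℤ) (b : ℕ) : ℂ :=
  ∑ α : ZMod c, vchi q c χ α * vTheta c d α ((b : ZMod c))

section stage3

variable (q c : ℕ) [NeZero q] [NeZero c] (χ : DirichletCharacter ℂ q) (d : ℤ)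

lemma vg_norm_le {s : ℂ} (p : ℕ × ℕ) :
    ‖vg q c χ d s p‖ ≤ ‖(p.1 : ℂ) ^ (-s)‖ * ‖(p.2 : ℂ) ^ (-s)‖ := by
  rw [vg, norm_mul, norm_mul]
  have h1 : ‖χ ((p.1 : ZMod q))‖ ≤ 1 := DirichletCharacter.norm_le_one χ _
  have h2 : ‖ZMod.stdAddChar (((p.1 * p.2 * d : ℤ) : ZMod c))‖ = 1 := by
    rw [ZMod.stdAddChar_apply, Circle.norm_coe]
  calc ‖χ ((p.1 : ZMod q))‖ * ‖ZMod.stdAddChar (((p.1 * p.2 * d : ℤ) : ZMod c))‖ *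
        ‖(p.1 : ℂ) ^ (-s) * (p.2 : ℂ) ^ (-s)‖
      ≤ 1 * 1 * ‖(p.1 : ℂ) ^ (-s) * (p.2 : ℂ) ^ (-s)‖ := by gcongr <;> simp [h2]
    _ = ‖(p.1 : ℂ) ^ (-s)‖ * ‖(p.2 : ℂ) ^ (-s)‖ := by rw [one_mul, one_mul, norm_mul]

set_option maxHeartbeats 1000000 in
lemma vg_norm_summable {s : ℂ} (hs : 1 < s.re) : Summable (fun p => ‖vg q c χ d s p‖) := by
  have hF : Summable (fun p : ℕ × ℕ => ‖(p.1 : ℂ) ^ (-s)‖ * ‖(p.2 : ℂ) ^ (-s)‖) :=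
    (vsummable_h hs).mul_of_nonneg (vsummable_h hs) (fun _ => norm_nonneg _)
      (fun _ => norm_nonneg _)
  exact Summable.of_nonneg_of_le (fun _ => norm_nonneg _) (vg_norm_le q c χ d) hF

lemma vg_summable {s : ℂ} (hs : 1 < s.re) : Summable (vg q c χ d s) :=
  (vg_norm_summable q c χ d hs).of_norm

lemma voronoiL_eq_tsum_vg {s : ℂ} (hs : 1 < s.re) :
    voronoiL χ c d s = ∑' p : ℕ × ℕ, vg q c χ d s p := by
  have hg := vg_summable q c χ d hs
  have hfib := hg.hasSum.tsum_fiberwise (fun p => p.1 * p.2)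
  rw [voronoiL]
  have key : ∀ m : ℕ,
      eisCoef χ m * Complex.exp (2 * π * I * ((m : ℂ) * (d : ℂ) / (c : ℂ))) * (m : ℂ) ^ (-s)
        = ∑' p : (fun p : ℕ × ℕ => p.1 * p.2) ⁻¹' {m}, vg q c χ d s p := by
    intro m
    rcases eq_or_ne m 0 with rfl | hm
    · have : ∀ p : (fun p : ℕ × ℕ => p.1 * p.2) ⁻¹' {(0 : ℕ)}, vg q c χ d s p.val = 0 := by
        rintro ⟨⟨p₁, p₂⟩, hp⟩
        have : p₁ * p₂ = 0 := hp
        have hz : s ≠ 0 := ne_zero_of_one_lt_re hs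
        rcases Nat.mul_eq_zero.mp this with rfl | rfl <;>
          simp [vg, Complex.zero_cpow (neg_ne_zero.mpr hz)]
      rw [tsum_congr this, tsum_zero]
      simp [eisCoef]
    · rw [vfiber_eq m hm, Finset.tsum_subtype' m.divisorsAntidiagonal (vg q c χ d s),
        eisCoef, Finset.sum_mul, Finset.sum_mul]
      refine Finset.sum_congr rfl fun p hp => ?_
      obtain ⟨hpm, hm0⟩ := Nat.mem_divisorsAntidiagonal.mp hp
      rw [vg]
      have he : Complex.exp (2 * π * I * ((m : ℂ) * (d : ℂ) / (c : ℂ)))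
          = ZMod.stdAddChar (((p.1 * p.2 * d : ℤ) : ZMod c)) := by
        rw [ZMod.stdAddChar_coe]
        congr 1
        rw [← hpm]
        push_cast
        ring
      have hc : ((m : ℂ)) ^ (-s) = (p.1 : ℂ) ^ (-s) * (p.2 : ℂ) ^ (-s) := by
        rw [← hpm]; push_cast
        exact natCast_mul_natCast_cpow _ _ _
      rw [he, hc]
  rw [tsum_congr key]
  exact hfib.tsum_eq

end stage3

section stage3b

variable (q c : ℕ) [NeZero q] [NeZero c] (χ : DirichletCharacter ℂ q) (d : ℤ)

lemma vcast_c_zero (hqc : q ∣ c) : ((c : ℕ) : ZMod q) = 0 := by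
  obtain ⟨r, rfl⟩ := hqc
  push_cast
  rw [ZMod.natCast_self, zero_mul]

lemma vresidue_class_chi (hqc : q ∣ c) (α : ZMod c) (k : ℕ) :
    ((α.val + c * k : ℕ) : ZMod q) = ((α.val : ℕ) : ZMod q) := by
  push_cast
  rw [vcast_c_zero q c hqc, zero_mul, add_zero]

lemma vresidue_class_cast (α : ZMod c) (k : ℕ) : ((α.val + c * k : ℕ) : ZMod c) = α := by
  push_cast
  rw [ZMod.natCast_self, zero_mul, add_zero, ZMod.natCast_rightInverse α]

lemma vH_eq_tsum {s : ℂ} (hs : 1 < s.re) (α : ZMod c) :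
    vH c α s = ∑' k : ℕ, ((α.val + c * k : ℕ) : ℂ) ^ (-s) := by
  rw [vH, vLFunction_eq_tsum c _ hs,
    Nat.sumByResidueClasses (vsummable c (fun β => if β = α then (1 : ℂ) else 0) hs) c]
  rw [Finset.sum_eq_single α ?_ ?_]
  · refine tsum_congr fun k => ?_
    rw [vresidue_class_cast]
    simp
  · intro β _ hβ
    have h0 : ∀ k : ℕ, (if (((β.val + c * k : ℕ)) : ZMod c) = α then (1 : ℂ) else 0) *
        ((β.val + c * k : ℕ) : ℂ) ^ (-s) = 0 := fun k => by
      rw [vresidue_class_cast, if_neg hβ, zero_mul]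
    rw [tsum_congr h0, tsum_zero]
  · intro h; exact absurd (Finset.mem_univ α) h

lemma tsum_vg_eq_vf (hqc : q ∣ c) {s : ℂ} (hs : 1 < s.re) :
    ∑' p : ℕ × ℕ, vg q c χ d s p = vf q c χ d s := by
  have hg := vg_summable q c χ d hs
  have hgn := vg_norm_summable q c χ d hs
  set J : ℕ → ℂ := fun a => ∑' b : ℕ, vg q c χ d s (a, b) with hJ
  have hJn : Summable (fun a : ℕ => ∑' b : ℕ, ‖vg q c χ d s (a, b)‖) :=
    ((summable_prod_of_nonneg (fun _ => norm_nonneg _)).mp hgn).2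
  have hJsum : Summable J := by
    refine Summable.of_norm_bounded hJn fun a => ?_
    exact norm_tsum_le_tsum_norm (hgn.prod_factor a)
  have hval : ∀ (α : ZMod c) (k : ℕ), J (α.val + c * k)
      = (vchi q c χ α * ((α.val + c * k : ℕ) : ℂ) ^ (-s)) * vZ c d α s := by
    intro α k
    have hb : ∀ b : ℕ, vg q c χ d s (α.val + c * k, b)
        = (vchi q c χ α * ((α.val + c * k : ℕ) : ℂ) ^ (-s)) *
          (vTheta c d α ((b : ZMod c)) * (b : ℂ) ^ (-s)) := by
      intro b
      rw [vg, vchi, vTheta]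
      have h2 : ((((α.val + c * k : ℕ) : ℤ) * (b : ℕ) * d : ℤ) : ZMod c) = (d : ZMod c) * α * ((b : ℕ) : ZMod c) := by
        push_cast
        rw [ZMod.natCast_self, zero_mul, add_zero, ZMod.natCast_rightInverse α]
        ring
      have h1 := vresidue_class_chi q c hqc α k
      simp only [h1, h2]
      ring
    rw [hJ]
    simp only []
    rw [tsum_congr hb, tsum_mul_left, vZ, vLFunction_eq_tsum c (vTheta c d α) hs]
  rw [Summable.tsum_prod' hg (fun a => hg.prod_factor a), Nat.sumByResidueClasses hJsum c, vf]
  refine Finset.sum_congr rfl fun α _ => ?_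
  have : ∀ k : ℕ, J (α.val + c * k)
      = (vchi q c χ α * vZ c d α s) * ((α.val + c * k : ℕ) : ℂ) ^ (-s) := by
    intro k; rw [hval α k]; ring
  rw [tsum_congr this, tsum_mul_left, vH_eq_tsum c hs α]
  ring

end stage3b

section stage4
variable (q c : ℕ) [NeZero q] [NeZero c] (χ : DirichletCharacter ℂ q) (d : ℤ)

lemma vD_unit (hd : IsCoprime d (c : ℤ)) : IsUnit ((d : ℤ) : ZMod c) := by
  obtain ⟨u, v, huv⟩ := hd
  have h := congrArg (fun z : ℤ => (z : ZMod c)) huv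
  push_cast at h
  have h2 : (u : ZMod c) * ((d : ℤ) : ZMod c) = 1 := by
    simpa [ZMod.natCast_self] using h
  exact isUnit_iff_exists_inv.mpr ⟨_, by rw [mul_comm]; exact h2⟩

lemma vchi_zero (hq : 1 < q) : vchi q c χ 0 = 0 := by
  haveI : Fact (1 < q) := ⟨hq⟩
  haveI : Nontrivial (ZMod q) := ZMod.nontrivial q
  rw [vchi, ZMod.val_zero, Nat.cast_zero]
  exact MulChar.map_nonunit χ (fun h => zero_ne_one (isUnit_zero_iff.mp h))

lemma vTheta_sum_zero (hd : IsCoprime d (c : ℤ)) {α : ZMod c} (hα : α ≠ 0) :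
    ∑ β : ZMod c, vTheta c d α β = 0 := by
  have h := AddChar.sum_mulShift ((d : ZMod c) * α) (ZMod.isPrimitive_stdAddChar c)
  have hne : (d : ZMod c) * α ≠ 0 := by
    intro h0
    exact hα (((vD_unit c d hd).mul_right_eq_zero).mp h0)
  rw [if_neg hne] at h
  push_cast at h
  rw [← h]
  refine Finset.sum_congr rfl fun β _ => ?_
  rw [vTheta, mul_comm]

lemma vZ_diff (hd : IsCoprime d (c : ℤ)) {α : ZMod c} (hα : α ≠ 0) :
    Differentiable ℂ (vZ c d α) :=
  ZMod.differentiable_LFunction_of_sum_zero (vTheta_sum_zero c d hd hα)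

lemma vZ_diffAt {s : ℂ} (hs : s ≠ 1) (α : ZMod c) : DifferentiableAt ℂ (vZ c d α) s :=
  ZMod.differentiableAt_LFunction _ s (Or.inl hs)

lemma vH_diffAt {s : ℂ} (hs : s ≠ 1) (α : ZMod c) : DifferentiableAt ℂ (vH c α) s :=
  ZMod.differentiableAt_LFunction _ s (Or.inl hs)

lemma vf_diffAt {s : ℂ} (hs : s ≠ 1) : DifferentiableAt ℂ (vf q c χ d) s := by
  show DifferentiableAt ℂ (fun s => ∑ α : ZMod c, vchi q c χ α * (vZ c d α s * vH c α s)) s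
  refine DifferentiableAt.fun_sum fun α _ => ?_
  exact (differentiableAt_const _).mul ((vZ_diffAt c d hs α).mul (vH_diffAt c hs α))

lemma vA_diff (hq : 1 < q) (hd : IsCoprime d (c : ℤ)) : Differentiable ℂ (vA q c χ d) := by
  show Differentiable ℂ (fun s => ∑ α : ZMod c, vchi q c χ α * vZ c d α s)
  refine Differentiable.fun_sum fun α _ => ?_
  rcases eq_or_ne α 0 with rfl | hα
  · simp only [vchi_zero q c χ hq, zero_mul]
    exact differentiable_const 0
  · exact ((vZ_diff c d hd hα).const_mul _)

lemma vH_residue (α : ZMod c) :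
    Tendsto (fun s : ℂ => (s - 1) * vH c α s) (nhdsWithin 1 {(1 : ℂ)}ᶜ) (nhds (1 / (c : ℂ))) := by
  have h := ZMod.LFunction_residue_one (fun β : ZMod c => if β = α then (1 : ℂ) else 0)
  have : (∑ j : ZMod c, (if j = α then (1 : ℂ) else 0) / (c : ℂ)) = 1 / (c : ℂ) := by
    rw [← Finset.sum_div]
    simp
  rwa [this] at h

lemma vf_residue (hq : 1 < q) (hd : IsCoprime d (c : ℤ)) :
    Tendsto (fun s : ℂ => (s - 1) * vf q c χ d s) (nhdsWithin 1 {(1 : ℂ)}ᶜ)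
      (nhds (vA q c χ d 1 / (c : ℂ))) := by
  have heq : (fun s : ℂ => (s - 1) * vf q c χ d s)
      = fun s => ∑ α : ZMod c, (vchi q c χ α * vZ c d α s) * ((s - 1) * vH c α s) := by
    funext s
    rw [vf, Finset.mul_sum]
    exact Finset.sum_congr rfl fun α _ => by ring
  have htgt : vA q c χ d 1 / (c : ℂ)
      = ∑ α : ZMod c, (vchi q c χ α * vZ c d α 1) * (1 / (c : ℂ)) := by
    rw [vA, Finset.sum_div]
    exact Finset.sum_congr rfl fun α _ => by ring
  rw [heq, htgt]
  refine tendsto_finset_sum _ fun α _ => ?_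
  rcases eq_or_ne α 0 with rfl | hα
  · simp only [vchi_zero q c χ hq, zero_mul]
    exact tendsto_const_nhds
  · refine Tendsto.mul ?_ (vH_residue c α)
    exact ((((vZ_diff c d hd hα) 1).continuousAt.tendsto).const_mul _).mono_left
      nhdsWithin_le_nhds
end stage4

section stage5
variable (q c r : ℕ) [NeZero q] [NeZero c] [NeZero r] (χ : DirichletCharacter ℂ q) (d : ℤ)

lemma vA_eq_tsum_vW {s : ℂ} (hs : 1 < s.re) :
    vA q c χ d s = ∑' b : ℕ, vW q c χ d b * (b : ℂ) ^ (-s) := by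
  rw [vA]
  have h1 : ∀ α : ZMod c, vchi q c χ α * vZ c d α s
      = ∑' b : ℕ, vchi q c χ α * (vTheta c d α ((b : ZMod c)) * (b : ℂ) ^ (-s)) := by
    intro α
    rw [vZ, vLFunction_eq_tsum c _ hs, ← tsum_mul_left]
  rw [Finset.sum_congr rfl fun α _ => h1 α,
    ← Summable.tsum_finsetSum (fun α _ => Summable.mul_left _ (vsummable c (vTheta c d α) hs))]
  refine tsum_congr fun b => ?_
  rw [vW, Finset.sum_mul]
  exact Finset.sum_congr rfl fun α _ => by ring

lemma vchi_natCast (hqc : q ∣ c) (i : ℕ) : vchi q c χ ((i : ZMod c)) = χ ((i : ZMod q)) := by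
  rw [vchi]
  congr 1
  have h1 : (i : ZMod c).val ≡ i [MOD c] := by
    rw [ZMod.val_natCast]
    exact (Nat.mod_modEq i c)
  exact (ZMod.natCast_eq_natCast_iff _ _ _).mpr (h1.of_dvd hqc)

lemma vW_eq (hqc : q ∣ c) (hcr : c = q * r) (b : ℕ) :
    vW q c χ d b
      = (∑ u ∈ Finset.range q, χ ((u : ZMod q)) * ZMod.stdAddChar (((d * u * b : ℤ) : ZMod c)))
        * (∑ v ∈ Finset.range r, (ZMod.stdAddChar (((d * q * b : ℤ) : ZMod c))) ^ v) := by
  rw [vW, ← vsum_range_zmod c (fun α => vchi q c χ α * vTheta c d α ((b : ZMod c)))]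
  have hterm : ∀ i ∈ Finset.range c,
      vchi q c χ ((i : ZMod c)) * vTheta c d ((i : ZMod c)) ((b : ZMod c))
        = χ ((i : ZMod q)) * ZMod.stdAddChar (((d * i * b : ℤ) : ZMod c)) := by
    intro i _
    rw [vchi_natCast q c χ hqc i, vTheta]
    congr 2
    push_cast
    ring
  rw [Finset.sum_congr rfl hterm]
  have hc' : Finset.range c = Finset.range (q * r) := by rw [hcr]
  rw [hc', vsum_range_mul q r (fun i => χ ((i : ZMod q)) *
    ZMod.stdAddChar (((d * i * b : ℤ) : ZMod c))), Finset.sum_product, Finset.sum_mul]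
  refine Finset.sum_congr rfl fun u _ => ?_
  rw [Finset.mul_sum]
  refine Finset.sum_congr rfl fun v _ => ?_
  have hχ : ((u + q * v : ℕ) : ZMod q) = (u : ZMod q) := by
    push_cast [ZMod.natCast_self]
    ring
  have hψ : ZMod.stdAddChar (((d * (u + q * v : ℕ) * b : ℤ) : ZMod c))
      = ZMod.stdAddChar (((d * u * b : ℤ) : ZMod c)) *
        ZMod.stdAddChar (((d * q * b : ℤ) : ZMod c)) ^ v := by
    rw [← AddChar.map_nsmul_eq_pow, ← AddChar.map_add_eq_mul]
    congr 1
    rw [nsmul_eq_mul]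
    push_cast
    ring
  rw [hχ, hψ]
  ring

lemma vz_pow_r (hcr : c = q * r) (b : ℕ) :
    (ZMod.stdAddChar (((d * q * b : ℤ) : ZMod c))) ^ r = 1 := by
  rw [← AddChar.map_nsmul_eq_pow]
  have h0 : (r : ℕ) • (((d * q * b : ℤ) : ZMod c)) = 0 := by
    rw [nsmul_eq_mul]
    have : ((r : ℕ) : ZMod c) * (((d * q * b : ℤ) : ZMod c)) = (((r * (d * q * b) : ℤ)) : ZMod c) := by
      push_cast
      ring
    rw [this, ZMod.intCast_zmod_eq_zero_iff_dvd]
    exact ⟨d * b, by push_cast [hcr]; ring⟩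
  rw [h0, AddChar.map_zero_eq_one]

lemma vW_eq_zero (hqc : q ∣ c) (hcr : c = q * r) (hd : IsCoprime d (c : ℤ)) {b : ℕ}
    (hb : ¬ r ∣ b) : vW q c χ d b = 0 := by
  rw [vW_eq q c r χ d hqc hcr b]
  have hz : (ZMod.stdAddChar (((d * q * b : ℤ) : ZMod c))) ≠ 1 := by
    intro h1
    have hx : (((d * q * b : ℤ)) : ZMod c) = 0 := by
      apply ZMod.injective_stdAddChar
      rw [h1, AddChar.map_zero_eq_one]
    rw [ZMod.intCast_zmod_eq_zero_iff_dvd] at hx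
    obtain ⟨t, ht⟩ := hx
    have hq0 : (q : ℤ) ≠ 0 := Int.natCast_ne_zero.mpr (NeZero.ne q)
    have hrb : (r : ℤ) ∣ d * b := by
      refine ⟨t, ?_⟩
      have : (q : ℤ) * (d * b) = (q : ℤ) * ((r : ℤ) * t) := by
        rw [← mul_assoc]
        push_cast [hcr] at ht ⊢
        linarith [ht]
      exact mul_left_cancel₀ hq0 this
    have hdr : IsCoprime (r : ℤ) d := by
      refine (IsCoprime.of_isCoprime_of_dvd_right hd ?_).symm
      exact ⟨q, by push_cast [hcr]; ring⟩
    have : (r : ℤ) ∣ (b : ℤ) := hdr.dvd_of_dvd_mul_left hrb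
    exact hb (Int.natCast_dvd_natCast.mp this)
  rw [geom_sum_eq hz, vz_pow_r q c r d hcr b, sub_self, zero_div, mul_zero]

lemma vW_mul (hprim : χ.IsPrimitive) (hqc : q ∣ c) (hcr : c = q * r) (k : ℕ) :
    vW q c χ d (r * k)
      = (χ⁻¹ ((d : ZMod q)) * χ⁻¹ ((k : ZMod q)) * gaussSum χ ZMod.stdAddChar) * r := by
  rw [vW_eq q c r χ d hqc hcr (r * k)]
  have hz1 : ZMod.stdAddChar (((d * q * (r * k : ℕ) : ℤ) : ZMod c)) = 1 := by
    have h0 : (((d * q * (r * k : ℕ) : ℤ)) : ZMod c) = 0 := by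
      rw [ZMod.intCast_zmod_eq_zero_iff_dvd]
      exact ⟨d * k, by push_cast [hcr]; ring⟩
    rw [h0, AddChar.map_zero_eq_one]
  rw [hz1]
  simp only [one_pow, Finset.sum_const, Finset.card_range, nsmul_eq_mul, mul_one]
  have hu : ∀ u ∈ Finset.range q,
      χ ((u : ZMod q)) * ZMod.stdAddChar (((d * u * (r * k : ℕ) : ℤ) : ZMod c))
        = χ ((u : ZMod q)) *
            (ZMod.stdAddChar (N := q)).mulShift (((d * k : ℤ) : ZMod q)) ((u : ZMod q)) := by
    intro u _
    congr 1
    rw [AddChar.mulShift_apply]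
    have hq0 : (q : ℂ) ≠ 0 := Nat.cast_ne_zero.mpr (NeZero.ne q)
    have hr0 : (r : ℂ) ≠ 0 := Nat.cast_ne_zero.mpr (NeZero.ne r)
    have harg : (((d * k : ℤ) : ZMod q)) * ((u : ZMod q)) = (((d * k * u : ℤ)) : ZMod q) := by
      push_cast
      ring
    rw [harg, ZMod.stdAddChar_coe, ZMod.stdAddChar_coe]
    congr 1
    have hcC : ((c : ℂ)) = (q : ℂ) * (r : ℂ) := by rw [hcr]; push_cast; ring
    rw [hcC]
    field_simp
    push_cast
    ring
  rw [Finset.sum_congr rfl hu,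
    vsum_range_zmod q (fun x => χ x * (ZMod.stdAddChar (N := q)).mulShift (((d * k : ℤ) : ZMod q)) x)]
  have : ∑ x : ZMod q, χ x * (ZMod.stdAddChar (N := q)).mulShift (((d * k : ℤ) : ZMod q)) x
      = gaussSum χ ((ZMod.stdAddChar (N := q)).mulShift (((d * k : ℤ) : ZMod q))) := rfl
  rw [this, gaussSum_mulShift_of_isPrimitive _ hprim]
  have hsplit : (χ⁻¹ : DirichletCharacter ℂ q) (((d * k : ℤ) : ZMod q))
      = χ⁻¹ ((d : ZMod q)) * χ⁻¹ ((k : ZMod q)) := by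
    push_cast
    rw [map_mul]
  rw [hsplit]

end stage5

section stage5b
variable (q c r : ℕ) [NeZero q] [NeZero c] [NeZero r] (χ : DirichletCharacter ℂ q) (d : ℤ)

lemma vA_eq_B (hprim : χ.IsPrimitive) (hqc : q ∣ c) (hcr : c = q * r)
    (hd : IsCoprime d (c : ℤ)) {s : ℂ} (hs : 1 < s.re) :
    vA q c χ d s = gaussSum χ ZMod.stdAddChar * χ⁻¹ ((d : ZMod q)) * (r : ℂ) ^ ((1 : ℂ) - s) *
      DirichletCharacter.LFunction χ⁻¹ s := by
  rw [vA_eq_tsum_vW q c χ d hs]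
  have hinj : Function.Injective (fun k : ℕ => r * k) := fun a b h => by
    simpa [Nat.pos_of_ne_zero (NeZero.ne r)] using
      Nat.eq_of_mul_eq_mul_left (Nat.pos_of_ne_zero (NeZero.ne r)) h
  have hsupp : Function.support (fun b : ℕ => vW q c χ d b * (b : ℂ) ^ (-s))
      ⊆ Set.range (fun k : ℕ => r * k) := by
    intro b hb
    by_contra hbr
    apply hb
    have hnd : ¬ r ∣ b := by
      intro ⟨k, hk⟩
      exact hbr ⟨k, hk.symm⟩
    show vW q c χ d b * (b : ℂ) ^ (-s) = 0
    rw [vW_eq_zero q c r χ d hqc hcr hd hnd, zero_mul]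
  rw [← Function.Injective.tsum_eq hinj hsupp]
  have hterm : ∀ k : ℕ, vW q c χ d (r * k) * ((r * k : ℕ) : ℂ) ^ (-s)
      = (gaussSum χ ZMod.stdAddChar * χ⁻¹ ((d : ZMod q)) * ((r : ℂ) ^ ((1 : ℂ) - s))) *
        (χ⁻¹ ((k : ZMod q)) * (k : ℂ) ^ (-s)) := by
    intro k
    rw [vW_mul q c r χ d hprim hqc hcr k]
    have h1 : ((r * k : ℕ) : ℂ) ^ (-s) = (r : ℂ) ^ (-s) * (k : ℂ) ^ (-s) := by
      push_cast
      exact natCast_mul_natCast_cpow _ _ _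
    have h2 : (r : ℂ) ^ ((1 : ℂ) - s) = (r : ℂ) * (r : ℂ) ^ (-s) := by
      rw [sub_eq_add_neg, cpow_add _ _ (Nat.cast_ne_zero.mpr (NeZero.ne r)), cpow_one]
    rw [h1, h2]
    ring
  rw [tsum_congr hterm, tsum_mul_left]
  have hL : DirichletCharacter.LFunction χ⁻¹ s
      = ∑' n : ℕ, (χ⁻¹ ((n : ZMod q)) : ℂ) * (n : ℂ) ^ (-s) := by
    show ZMod.LFunction (⇑χ⁻¹) s = _
    exact vLFunction_eq_tsum q (⇑χ⁻¹) hs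
  rw [hL]

lemma vchi_ne_one (hq : 1 < q) (hprim : χ.IsPrimitive) : χ ≠ 1 := by
  intro h
  rw [DirichletCharacter.IsPrimitive, h, DirichletCharacter.conductor_one] at hprim
  omega

lemma vB_diff (hq : 1 < q) (hprim : χ.IsPrimitive) :
    Differentiable ℂ (fun s : ℂ => gaussSum χ ZMod.stdAddChar * χ⁻¹ ((d : ZMod q)) *
      (r : ℂ) ^ ((1 : ℂ) - s) * DirichletCharacter.LFunction χ⁻¹ s) := by
  have hne : (χ⁻¹ : DirichletCharacter ℂ q) ≠ 1 := by
    intro h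
    exact vchi_ne_one q χ hq hprim (by rwa [inv_eq_one] at h)
  have h1 : Differentiable ℂ (fun s : ℂ => (r : ℂ) ^ ((1 : ℂ) - s)) := by
    apply Differentiable.const_cpow
    · exact (differentiable_const _).sub differentiable_id
    · exact Or.inl (Nat.cast_ne_zero.mpr (NeZero.ne r))
  exact ((h1.const_mul _).mul (DirichletCharacter.differentiable_LFunction hne))

end stage5b

section stage6
variable (q c r : ℕ) [NeZero q] [NeZero c] [NeZero r] (χ : DirichletCharacter ℂ q) (d : ℤ)

lemma vA_one (hq : 1 < q) (hprim : χ.IsPrimitive) (hqc : q ∣ c) (hcr : c = q * r)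
    (hd : IsCoprime d (c : ℤ)) :
    vA q c χ d 1 = gaussSum χ ZMod.stdAddChar * χ⁻¹ ((d : ZMod q)) *
      DirichletCharacter.LFunction χ⁻¹ 1 := by
  set B : ℂ → ℂ := fun s => gaussSum χ ZMod.stdAddChar * χ⁻¹ ((d : ZMod q)) *
    (r : ℂ) ^ ((1 : ℂ) - s) * DirichletCharacter.LFunction χ⁻¹ s with hB
  have hAan : AnalyticOnNhd ℂ (vA q c χ d) Set.univ :=
    ((vA_diff q c χ d hq hd).differentiableOn).analyticOnNhd isOpen_univ
  have hBan : AnalyticOnNhd ℂ B Set.univ :=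
    ((vB_diff q r χ d hq hprim).differentiableOn).analyticOnNhd isOpen_univ
  have hopen : IsOpen {s : ℂ | 1 < s.re} := isOpen_lt continuous_const Complex.continuous_re
  have h2 : (2 : ℂ) ∈ {s : ℂ | 1 < s.re} := by simp
  have hfg : vA q c χ d =ᶠ[nhds 2] B := by
    filter_upwards [hopen.mem_nhds h2] with s hs
    exact vA_eq_B q c r χ d hprim hqc hcr hd hs
  have heq := hAan.eqOn_of_preconnected_of_eventuallyEq hBan isPreconnected_univ
    (Set.mem_univ 2) hfg
  have h1 := heq (Set.mem_univ 1)
  rw [h1, hB]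
  simp only [sub_self, cpow_zero, mul_one]

lemma vgaussSumOf : gaussSumOf χ = gaussSum χ ZMod.stdAddChar := by
  rw [gaussSumOf, gaussSum, ← vsum_range_zmod q (fun x => χ x * ZMod.stdAddChar x)]
  refine Finset.sum_congr rfl fun i _ => ?_
  congr 1
  rw [show ((i : ℕ) : ZMod q) = (((i : ℕ) : ℤ) : ZMod q) by push_cast; rfl,
    ZMod.stdAddChar_coe]
  congr 1
  push_cast
  ring

lemma vstar_eq_inv : χ.ringHomComp (starRingEnd ℂ) = χ⁻¹ := MulChar.star_eq_inv χ

lemma vresidue_value (hq : 1 < q) (hprim : χ.IsPrimitive) (hqc : q ∣ c) (hcr : c = q * r)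
    (hd : IsCoprime d (c : ℤ)) :
    vA q c χ d 1 / (c : ℂ)
      = gaussSumOf χ * (starRingEnd ℂ) (χ ((d : ZMod q))) *
          DirichletCharacter.LFunction (χ.ringHomComp (starRingEnd ℂ)) 1 / (c : ℂ) := by
  rw [vA_one q c r χ d hq hprim hqc hcr hd, vgaussSumOf, vstar_eq_inv]
  congr 2
  rw [starRingEnd_apply, MulChar.star_apply']

end stage6

/-- For `χ` even primitive mod `q > 1`, `q ∣ c`, `gcd(d,c) = 1`, the series
`L(s, E_{χ,1}, d/c)` converges absolutely for `Re s > 1` and extends to a meromorphic function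
on `ℂ`, holomorphic away from a simple pole at `s = 1` with residue `τ(χ) χ̄(d) L(1,χ̄)/c`. -/
theorem stmt_14 (q : ℕ) [NeZero q] (hq : 1 < q) (χ : DirichletCharacter ℂ q)
    (hprim : χ.IsPrimitive) (heven : χ (-1) = 1)
    (c : ℕ) (hc : 0 < c) (hqc : q ∣ c) (d : ℤ) (hd : IsCoprime d (c : ℤ)) :
    (∀ s : ℂ, 1 < s.re → Summable fun m : ℕ =>
      ‖eisCoef χ m * Complex.exp (2 * π * I * ((m : ℂ) * (d : ℂ) / (c : ℂ))) *
        (m : ℂ) ^ (-s)‖) ∧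
    ∃ f : ℂ → ℂ,
      (∀ s : ℂ, 1 < s.re → f s = voronoiL χ c d s) ∧
      (∀ s : ℂ, s ≠ 1 → DifferentiableAt ℂ f s) ∧
      Tendsto (fun s : ℂ => (s - 1) * f s) (nhdsWithin 1 {(1 : ℂ)}ᶜ)
        (nhds (gaussSumOf χ * (starRingEnd ℂ) (χ (d : ZMod q)) *
          DirichletCharacter.LFunction (χ.ringHomComp (starRingEnd ℂ)) 1 / (c : ℂ))) := by
  haveI : NeZero c := ⟨hc.ne'⟩
  haveI : NeZero (c / q) := ⟨(Nat.div_pos (Nat.le_of_dvd hc hqc) (by omega)).ne'⟩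
  have hcr : c = q * (c / q) := (Nat.mul_div_cancel' hqc).symm
  refine ⟨fun s hs => vsummable_main q χ c d hs, vf q c χ d, ?_,
    fun s hs => vf_diffAt q c χ d hs, ?_⟩
  · intro s hs
    rw [voronoiL_eq_tsum_vg q c χ d hs, tsum_vg_eq_vf q c χ d hqc hs]
  · have h := vf_residue q c χ d hq hd
    rwa [vresidue_value q c (c / q) χ d hq hprim hqc hcr hd] at h
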